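/- For all real numbers b, all μ > 0, σ > 0, and all real α > 1, one has (Φ((b-μ)/(μσ)))^(α-1) · Φ((b+(α-1)μ)/(μσ)) ≤ (Φ(b/(μσ)))^α, where powers are real powers (well-defined since Φ is strictly positive). -/

import Mathlib

open MeasureTheory Real Filter Topology

/-- The standard normal cumulative distribution function
`Φ(x) = (√(2π))⁻¹ ∫_{-∞}^x exp(-t²/2) dt`. -/
noncomputable def stdNormalCDF (x : ℝ) : ℝ :=
  (Real.sqrt (2 * Real.pi))⁻¹ * ∫ t in Set.Iic x, Real.exp (-t ^ 2 / 2)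

/-- The standard normal density `φ(x) = (√(2π))⁻¹ exp(-x²/2)`. -/
noncomputable def stdNormalPDF (x : ℝ) : ℝ :=
  (Real.sqrt (2 * Real.pi))⁻¹ * Real.exp (-x ^ 2 / 2)

lemma gaussInt : Integrable (fun t : ℝ => Real.exp (-t ^ 2 / 2)) := by
  have h := integrable_exp_neg_mul_sq (b := (1:ℝ)/2) (by norm_num)
  refine h.congr ?_
  apply Filter.Eventually.of_forall
  intro t
  ring_nf

lemma gaussIntMul : Integrable (fun t : ℝ => t * Real.exp (-t ^ 2 / 2)) := by
  have h := integrable_mul_exp_neg_mul_sq (b := (1:ℝ)/2) (by norm_num)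
  refine h.congr ?_
  apply Filter.Eventually.of_forall
  intro t
  ring_nf

lemma cdf_pos (x : ℝ) : 0 < stdNormalCDF x := by
  unfold stdNormalCDF
  apply mul_pos (inv_pos.2 (Real.sqrt_pos.2 (by positivity)))
  rw [setIntegral_pos_iff_support_of_nonneg_ae
    (Filter.Eventually.of_forall fun t => (Real.exp_pos _).le) gaussInt.integrableOn]
  have hsupp : Function.support (fun t : ℝ => Real.exp (-t ^ 2 / 2)) = Set.univ := by
    ext t; simp [Real.exp_ne_zero]
  rw [hsupp, Set.univ_inter]
  simp [Real.volume_Iic]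

lemma pdf_pos (x : ℝ) : 0 < stdNormalPDF x := by
  unfold stdNormalPDF
  positivity

lemma hasDerivAt_exp_gauss (x : ℝ) :
    HasDerivAt (fun t : ℝ => Real.exp (-t ^ 2 / 2)) (-x * Real.exp (-x ^ 2 / 2)) x := by
  have h1 : HasDerivAt (fun t : ℝ => -t ^ 2 / 2) (-x) x := by
    have := ((hasDerivAt_pow 2 x).neg.div_const 2)
    simpa using this.congr_deriv (by ring)
  simpa [mul_comm] using h1.exp

lemma hasDerivAt_cdf (x : ℝ) : HasDerivAt stdNormalCDF (stdNormalPDF x) x := by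
  have key : ∀ y : ℝ, stdNormalCDF y =
      (Real.sqrt (2 * Real.pi))⁻¹ * ((∫ t in Set.Iic (0:ℝ), Real.exp (-t ^ 2 / 2))
        + ∫ t in (0:ℝ)..y, Real.exp (-t ^ 2 / 2)) := by
    intro y
    unfold stdNormalCDF
    congr 1
    have := intervalIntegral.integral_Iic_sub_Iic (μ := volume)
      (f := fun t : ℝ => Real.exp (-t ^ 2 / 2)) gaussInt.integrableOn gaussInt.integrableOn
      (a := 0) (b := y)
    linarith
  have h : HasDerivAt (fun y : ℝ => (Real.sqrt (2 * Real.pi))⁻¹ *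
      ((∫ t in Set.Iic (0:ℝ), Real.exp (-t ^ 2 / 2)) + ∫ t in (0:ℝ)..y, Real.exp (-t ^ 2 / 2)))
      ((Real.sqrt (2 * Real.pi))⁻¹ * Real.exp (-x ^ 2 / 2)) x := by
    have hF : HasDerivAt (fun y : ℝ => ∫ t in (0:ℝ)..y, Real.exp (-t ^ 2 / 2))
        (Real.exp (-x ^ 2 / 2)) x := by
      apply intervalIntegral.integral_hasDerivAt_right
      · exact gaussInt.intervalIntegrable
      · exact (Real.continuous_exp.comp (by continuity)).stronglyMeasurableAtFilter _ _
      · exact (Real.continuous_exp.comp (by continuity)).continuousAt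
    simpa using ((hF.const_add _).const_mul ((Real.sqrt (2 * Real.pi))⁻¹))
  have : stdNormalCDF = fun y : ℝ => (Real.sqrt (2 * Real.pi))⁻¹ *
      ((∫ t in Set.Iic (0:ℝ), Real.exp (-t ^ 2 / 2)) + ∫ t in (0:ℝ)..y, Real.exp (-t ^ 2 / 2)) :=
    funext key
  rw [this]
  exact h

lemma hasDerivAt_pdf (x : ℝ) : HasDerivAt stdNormalPDF (-x * stdNormalPDF x) x := by
  unfold stdNormalPDF
  have h := (hasDerivAt_exp_gauss x).const_mul ((Real.sqrt (2 * Real.pi))⁻¹)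
  exact h.congr_deriv (by ring)

set_option maxHeartbeats 1000000 in
lemma gauss_tail_integral (x : ℝ) :
    ∫ t in Set.Iic x, t * Real.exp (-t ^ 2 / 2) = -Real.exp (-x ^ 2 / 2) := by
  have hderiv : ∀ t ∈ Set.Iic x, HasDerivAt (fun t : ℝ => -Real.exp (-t ^ 2 / 2))
      (t * Real.exp (-t ^ 2 / 2)) t := by
    intro t _
    have h := (hasDerivAt_exp_gauss t).neg
    simp only [neg_mul, neg_neg] at h
    exact h
  have hlim : Tendsto (fun t : ℝ => -Real.exp (-t ^ 2 / 2)) atBot (𝓝 0) := by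
    have h1 : Tendsto (fun t : ℝ => -t ^ 2 / 2) atBot atBot := by
      have h2 : Tendsto (fun t : ℝ => t ^ 2) atBot atTop := by
        have ha : Tendsto (fun x : ℝ => x ^ 2) atTop atTop := tendsto_pow_atTop (by norm_num)
        have hb : Tendsto (fun x : ℝ => -x) atBot atTop := tendsto_neg_atBot_atTop
        refine (ha.comp hb).congr fun t => by simp [Function.comp]
      have h3 : Tendsto (fun t : ℝ => t ^ 2 / 2) atBot atTop :=
        h2.atTop_div_const (by norm_num)
      have := tendsto_neg_atTop_atBot.comp h3
      refine this.congr fun t => by simp only [Function.comp_apply]; ring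
    have := (Real.tendsto_exp_atBot.comp h1).neg
    simpa using this
  have := integral_Iic_of_hasDerivAt_of_tendsto' hderiv gaussIntMul.integrableOn hlim
  rw [this]; ring

lemma mills (x : ℝ) : -x * stdNormalCDF x ≤ stdNormalPDF x := by
  rcases le_or_gt 0 x with hx | hx
  · have h1 := (cdf_pos x).le
    have h2 := (pdf_pos x).le
    nlinarith
  · have hcmp : ∫ t in Set.Iic x, Real.exp (-t ^ 2 / 2)
        ≤ ∫ t in Set.Iic x, x⁻¹ * (t * Real.exp (-t ^ 2 / 2)) := by
      apply setIntegral_mono_on gaussInt.integrableOn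
        (gaussIntMul.integrableOn.const_mul _) measurableSet_Iic
      intro t ht
      have ht' : t ≤ x := ht
      have hx' : x < 0 := hx
      have h1 : (1:ℝ) ≤ x⁻¹ * t := by
        rw [inv_mul_eq_div, le_div_iff_of_neg hx']
        linarith
      have h2 : (0:ℝ) < Real.exp (-t ^ 2 / 2) := Real.exp_pos _
      calc Real.exp (-t ^ 2 / 2) = 1 * Real.exp (-t ^ 2 / 2) := by ring
        _ ≤ (x⁻¹ * t) * Real.exp (-t ^ 2 / 2) := by
            exact mul_le_mul_of_nonneg_right h1 h2.le
        _ = x⁻¹ * (t * Real.exp (-t ^ 2 / 2)) := by ring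
    rw [MeasureTheory.integral_const_mul, gauss_tail_integral] at hcmp
    have hI : -x * ∫ t in Set.Iic x, Real.exp (-t ^ 2 / 2) ≤ Real.exp (-x ^ 2 / 2) := by
      have hxne : x ≠ 0 := hx.ne
      have h5 : -x * (x⁻¹ * -Real.exp (-x ^ 2 / 2)) = Real.exp (-x ^ 2 / 2) := by
        field_simp
      have h6 := mul_le_mul_of_nonneg_left hcmp (neg_nonneg.2 hx.le)
      linarith [h6, h5.le]
    unfold stdNormalCDF stdNormalPDF
    have hc : (0:ℝ) ≤ (Real.sqrt (2 * Real.pi))⁻¹ := by positivity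
    calc -x * ((Real.sqrt (2 * Real.pi))⁻¹ * ∫ t in Set.Iic x, Real.exp (-t ^ 2 / 2))
        = (Real.sqrt (2 * Real.pi))⁻¹ * (-x * ∫ t in Set.Iic x, Real.exp (-t ^ 2 / 2)) := by ring
      _ ≤ (Real.sqrt (2 * Real.pi))⁻¹ * Real.exp (-x ^ 2 / 2) :=
          mul_le_mul_of_nonneg_left hI hc

lemma hasDerivAt_log_cdf (x : ℝ) :
    HasDerivAt (fun y => Real.log (stdNormalCDF y)) (stdNormalPDF x / stdNormalCDF x) x :=
  (hasDerivAt_cdf x).log (cdf_pos x).ne'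

lemma concave_log_cdf : ConcaveOn ℝ Set.univ (fun x => Real.log (stdNormalCDF x)) := by
  set g := fun x => Real.log (stdNormalCDF x) with hg
  have hderiv : deriv g = fun x => stdNormalPDF x / stdNormalCDF x :=
    funext fun x => (hasDerivAt_log_cdf x).deriv
  have hg2 : ∀ x, HasDerivAt (deriv g)
      ((-x * stdNormalPDF x * stdNormalCDF x - stdNormalPDF x * stdNormalPDF x)
        / (stdNormalCDF x) ^ 2) x := by
    intro x
    rw [hderiv]
    exact (hasDerivAt_pdf x).div (hasDerivAt_cdf x) (cdf_pos x).ne'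
  apply concaveOn_of_deriv2_nonpos convex_univ
  · exact fun x _ => (hasDerivAt_log_cdf x).continuousAt.continuousWithinAt
  · exact fun x _ => (hasDerivAt_log_cdf x).differentiableAt.differentiableWithinAt
  · exact fun x _ => (hg2 x).differentiableAt.differentiableWithinAt
  · intro x _
    have h2 : deriv^[2] g x = deriv (deriv g) x := by
      simp [Function.iterate_succ, Function.iterate_zero]
    rw [h2, (hg2 x).deriv]
    apply div_nonpos_of_nonpos_of_nonneg _ (sq_nonneg _)
    have hm := mills x
    have hp := (pdf_pos x).le
    nlinarith
  
/-- First inequality of Theorem 4.2: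
`Φ((b-μ)/(μσ))^(α-1) · Φ((b+(α-1)μ)/(μσ)) ≤ Φ(b/(μσ))^α` (real powers). -/
theorem cdf_inequality_first (b μ σ α : ℝ) (hμ : 0 < μ) (hσ : 0 < σ) (hα : 1 < α) :
    stdNormalCDF ((b - μ) / (μ * σ)) ^ (α - 1) *
      stdNormalCDF ((b + (α - 1) * μ) / (μ * σ)) ≤
    stdNormalCDF (b / (μ * σ)) ^ α := by
  have hα0 : (0:ℝ) < α := lt_trans one_pos hα
  have hs : (0:ℝ) < μ * σ := mul_pos hμ hσ
  set x₁ := (b - μ) / (μ * σ) with hx₁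
  set x₂ := (b + (α - 1) * μ) / (μ * σ) with hx₂
  set x₀ := b / (μ * σ) with hx₀
  have ha : (0:ℝ) ≤ (α - 1) / α := div_nonneg (by linarith) hα0.le
  have hb : (0:ℝ) ≤ 1 / α := by positivity
  have hab : (α - 1) / α + 1 / α = 1 := by field_simp; ring
  have hαne : α ≠ 0 := hα0.ne'
  have hsne : μ * σ ≠ 0 := hs.ne'
  have hcomb : ((α - 1) / α) • x₁ + (1 / α) • x₂ = x₀ := by
    rw [smul_eq_mul, smul_eq_mul, hx₁, hx₂, hx₀]
    field_simp
    ring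
  have hcon := concave_log_cdf.2 (Set.mem_univ x₁) (Set.mem_univ x₂) ha hb hab
  rw [hcomb] at hcon
  simp only [smul_eq_mul] at hcon
  have h2 : (α - 1) * Real.log (stdNormalCDF x₁) + Real.log (stdNormalCDF x₂)
      ≤ α * Real.log (stdNormalCDF x₀) := by
    have := mul_le_mul_of_nonneg_left hcon hα0.le
    calc (α - 1) * Real.log (stdNormalCDF x₁) + Real.log (stdNormalCDF x₂)
        = α * ((α - 1) / α * Real.log (stdNormalCDF x₁) + 1 / α * Real.log (stdNormalCDF x₂)) := by
          field_simp
      _ ≤ α * Real.log (stdNormalCDF x₀) := this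
  calc stdNormalCDF x₁ ^ (α - 1) * stdNormalCDF x₂
      = Real.exp ((α - 1) * Real.log (stdNormalCDF x₁) + Real.log (stdNormalCDF x₂)) := by
        rw [Real.exp_add, Real.exp_log (cdf_pos x₂),
          Real.rpow_def_of_pos (cdf_pos x₁), mul_comm (Real.log _)]
    _ ≤ Real.exp (α * Real.log (stdNormalCDF x₀)) := Real.exp_le_exp.2 h2
    _ = stdNormalCDF x₀ ^ α := by
        rw [Real.rpow_def_of_pos (cdf_pos x₀), mul_comm]
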